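/- Let A be a tensor in ℝ^(n^m) with m ≥ 2, and suppose (x, λ) and (x', λ') are both tropical H-eigenpairs of A. Then λ = λ'. That is, the tropical H-eigenvalue of a real tensor is unique. -/

import Mathlib

lemma trop_le (n k : ℕ) (hn : 0 < n) (hk : 1 ≤ k)
    (A : Fin n → (Fin k → Fin n) → ℝ)
    (x x' : Fin n → ℝ) (lam lam' : ℝ)
    (heig : ∀ i : Fin n,
      Finset.univ.inf' ⟨fun _ => ⟨0, hn⟩, Finset.mem_univ _⟩
        (fun t : Fin k → Fin n => A i t + ∑ j, x (t j)) = lam + (k : ℝ) * x i)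
    (heig' : ∀ i : Fin n,
      Finset.univ.inf' ⟨fun _ => ⟨0, hn⟩, Finset.mem_univ _⟩
        (fun t : Fin k → Fin n => A i t + ∑ j, x' (t j)) = lam' + (k : ℝ) * x' i) :
    lam ≤ lam' := by
  have hne : (Finset.univ : Finset (Fin n)).Nonempty := ⟨⟨0, hn⟩, Finset.mem_univ _⟩
  obtain ⟨i, -, hi⟩ := Finset.exists_max_image Finset.univ (fun i => x i - x' i) hne
  have hne' : (Finset.univ : Finset (Fin k → Fin n)).Nonempty :=
    ⟨fun _ => ⟨0, hn⟩, Finset.mem_univ _⟩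
  obtain ⟨t, -, ht⟩ := Finset.exists_mem_eq_inf' hne'
    (fun t : Fin k → Fin n => A i t + ∑ j, x' (t j))
  have h1 : lam + (k : ℝ) * x i ≤ A i t + ∑ j, x (t j) := by
    rw [← heig i]
    exact Finset.inf'_le _ (Finset.mem_univ t)
  have h2 : ∑ j, x (t j) ≤ ∑ j, x' (t j) + (k : ℝ) * (x i - x' i) := by
    have := Finset.sum_le_sum (f := fun j : Fin k => x (t j))
      (g := fun j : Fin k => x' (t j) + (x i - x' i)) (s := Finset.univ)
      (fun j _ => by have := hi (t j) (Finset.mem_univ _); show x (t j) ≤ x' (t j) + (x i - x' i); linarith)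
    simp [Finset.sum_add_distrib, mul_comm] at this
    linarith
  have h3 : A i t + ∑ j, x' (t j) = lam' + (k : ℝ) * x' i := by
    rw [← heig' i, ht]
  nlinarith [h1, h2, h3]

theorem stmt_4 (n k : ℕ) (hn : 0 < n) (hk : 1 ≤ k)
    (A : Fin n → (Fin k → Fin n) → ℝ)
    (x x' : Fin n → ℝ) (lam lam' : ℝ)
    (heig : ∀ i : Fin n,
      Finset.univ.inf' ⟨fun _ => ⟨0, hn⟩, Finset.mem_univ _⟩
        (fun t : Fin k → Fin n => A i t + ∑ j, x (t j)) = lam + (k : ℝ) * x i)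
    (heig' : ∀ i : Fin n,
      Finset.univ.inf' ⟨fun _ => ⟨0, hn⟩, Finset.mem_univ _⟩
        (fun t : Fin k → Fin n => A i t + ∑ j, x' (t j)) = lam' + (k : ℝ) * x' i) :
    lam = lam' := le_antisymm
  (trop_le n k hn hk A x x' lam lam' heig heig')
  (trop_le n k hn hk A x' x lam' lam heig' heig)
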